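/- For any Boolean network f and any binary configurations x, y ∈ 𝔹^n, if y is reachable from x under the most permissive semantics, then there exists a multivalued network F over values {0,1,2} which is a refinement of f and in which the configuration 2·y (each component doubled) is reachable from 2·x under the asynchronous multivalued semantics. -/

import Mathlib

inductive PState : Type
  | zero | up | down | one
deriving DecidableEq

def PState.ofBool : Bool → PState
  | false => .zero
  | true  => .one

def PState.isBool (p : PState) : Prop := p = .zero ∨ p = .one

abbrev BN (n : ℕ) := (Fin n → Bool) → Fin n → Bool

def gamma {n : ℕ} (x : Fin n → PState) : Set (Fin n → Bool) :=
  {b | ∀ i (v : Bool), x i = PState.ofBool v → b i = v}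

def mpStep {n : ℕ} (f : BN n) (x y : Fin n → PState) : Prop :=
  ∃ i : Fin n, x i ≠ y i ∧ (∀ j, j ≠ i → x j = y j) ∧
    ((y i = .up ∧ x i ≠ .one ∧ ∃ z ∈ gamma x, f z i = true) ∨
     (y i = .one ∧ x i = .up) ∨
     (y i = .down ∧ x i ≠ .zero ∧ ∃ z ∈ gamma x, f z i = false) ∨
     (y i = .zero ∧ x i = .down))

def mpReachP {n : ℕ} (f : BN n) : (Fin n → PState) → (Fin n → PState) → Prop :=
  Relation.ReflTransGen (mpStep f)

def embed {n : ℕ} (x : Fin n → Bool) : Fin n → PState := fun i => PState.ofBool (x i)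

def mpReach {n : ℕ} (f : BN n) (x : Fin n → Bool) : Set (Fin n → Bool) :=
  {y | mpReachP f (embed x) (embed y)}

def cubeSet {n : ℕ} (h : Fin n → Option Bool) : Set (Fin n → Bool) :=
  {z | ∀ i b, h i = some b → z i = b}

def smaller {n : ℕ} (h h' : Fin n → Option Bool) : Prop :=
  ∀ i b, h' i = some b → h i = some b

def kClosed {n : ℕ} (f : BN n) (K : Finset (Fin n)) (h : Fin n → Option Bool) : Prop :=
  ∀ z ∈ cubeSet h, ∀ i ∈ K, h i = none ∨ h i = some (f z i)

def closedBy {n : ℕ} (f : BN n) (h : Fin n → Option Bool) : Prop :=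
  ∀ z ∈ cubeSet h, f z ∈ cubeSet h

def smallestClosed {n : ℕ} (f : BN n) (x : Fin n → Bool) (h : Fin n → Option Bool) : Prop :=
  x ∈ cubeSet h ∧ closedBy f h ∧
    ∀ h', x ∈ cubeSet h' → closedBy f h' → smaller h h'

def minClosed {n : ℕ} (f : BN n) (h : Fin n → Option Bool) : Prop :=
  closedBy f h ∧ ∀ h', closedBy f h' → smaller h' h → h' = h

def faStep {n : ℕ} (f : BN n) (x y : Fin n → Bool) : Prop :=
  ∃ i : Fin n, x i ≠ y i ∧ (∀ j, j ≠ i → x j = y j) ∧ y i = f x i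

def aStep {n : ℕ} (f : BN n) (x y : Fin n → Bool) : Prop :=
  x ≠ y ∧ ∀ i, x i ≠ y i → y i = f x i

def mnStep {n m : ℕ} (F : (Fin n → Fin (m+1)) → Fin n → ℤ)
    (x y : Fin n → Fin (m+1)) : Prop :=
  x ≠ y ∧ ∀ i, x i ≠ y i → ((y i : ℤ) = (x i : ℤ) + F x i)

def beta {n m : ℕ} (x : Fin n → Fin (m+1)) : Set (Fin n → Bool) :=
  {b | ∀ i, ((x i : ℕ) = 0 → b i = false) ∧ ((x i : ℕ) = m → b i = true)}

def refines {n m : ℕ} (F : (Fin n → Fin (m+1)) → Fin n → ℤ) (f : BN n) : Prop :=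
  ∀ x i, (F x i > 0 → ∃ b ∈ beta x, f b i = true) ∧
         (F x i < 0 → ∃ b ∈ beta x, f b i = false)

def alpha {n m : ℕ} (x : Fin n → Fin (m+1)) : Set (Fin n → PState) :=
  {p | ∀ i, ((x i : ℕ) = 0 ↔ p i = .zero) ∧ ((x i : ℕ) = m ↔ p i = .one)}

def bdStep {n : ℕ} (f : BN n) (L : Finset (Fin n)) (a b : Fin n → PState) : Prop :=
  mpStep f a b ∧ ∃ j, a j ≠ b j ∧ j ∉ L ∧ (a j).isBool ∧ ¬ (b j).isBool

def exhaustive {n : ℕ} (f : BN n) (x : Fin n → Bool) (L : Finset (Fin n))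
    (zhat : Fin n → PState) : Prop :=
  Relation.ReflTransGen (bdStep f L) (embed x) zhat ∧ ∀ z', ¬ bdStep f L zhat z'

def double {n : ℕ} (x : Fin n → Bool) : Fin n → Fin 3 :=
  fun i => if x i then (2 : Fin 3) else (0 : Fin 3)

section Stmt10Aux

variable {n : ℕ}

lemma pofBool_inj {a b : Bool} (h : PState.ofBool a = PState.ofBool b) : a = b := by
  cases a <;> cases b <;> simp_all [PState.ofBool]

lemma double_ne_one (x : Fin n → Bool) (i : Fin n) : double x i ≠ (1 : Fin 3) := by
  by_cases h : x i <;> simp [double, h] <;> decide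

lemma double_inj {x y : Fin n → Bool} (h : double x = double y) : x = y := by
  funext i
  have := congrFun h i
  by_cases hx : x i <;> by_cases hy : y i <;> simp_all [double]

def zzS (x : Fin n → Bool) (E : Finset (Fin n)) : Fin n → Fin 3 :=
  fun i => if i ∈ E then 1 else double x i

lemma zzS_mem {x : Fin n → Bool} {E : Finset (Fin n)} {i : Fin n} (h : i ∈ E) :
    zzS x E i = 1 := if_pos h

lemma zzS_notmem {x : Fin n → Bool} {E : Finset (Fin n)} {i : Fin n} (h : i ∉ E) :
    zzS x E i = double x i := if_neg h

lemma zz_val0 {x : Fin n → Bool} {E : Finset (Fin n)} {i : Fin n}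
    (h : ((zzS x E i : ℕ)) = 0) : i ∉ E ∧ x i = false := by
  by_cases hiE : i ∈ E
  · rw [zzS_mem hiE] at h; exact absurd h (by decide)
  · rw [zzS_notmem hiE] at h
    refine ⟨hiE, ?_⟩
    by_cases hx : x i
    · simp [double, hx] at h
    · simpa using hx

lemma zz_val2 {x : Fin n → Bool} {E : Finset (Fin n)} {i : Fin n}
    (h : ((zzS x E i : ℕ)) = 2) : i ∉ E ∧ x i = true := by
  by_cases hiE : i ∈ E
  · rw [zzS_mem hiE] at h; exact absurd h (by decide)
  · rw [zzS_notmem hiE] at h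
    refine ⟨hiE, ?_⟩
    by_cases hx : x i
    · exact hx
    · simp [double, hx] at h

lemma gamma_sub {x : Fin n → Bool} {E : Finset (Fin n)} {q : Fin n → PState}
    (hout : ∀ i, i ∉ E → q i = PState.ofBool (x i)) :
    gamma q ⊆ beta (m := 2) (zzS x E) := by
  intro b hb i
  constructor
  · intro h0
    obtain ⟨hiE, hx⟩ := zz_val0 h0
    exact hb i false (by rw [hout i hiE, hx])
  · intro h2
    obtain ⟨hiE, hx⟩ := zz_val2 h2
    exact hb i true (by rw [hout i hiE, hx])

lemma beta_mono {x : Fin n → Bool} {E E' : Finset (Fin n)} (hEE : E ⊆ E') :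
    beta (m := 2) (zzS x E) ⊆ beta (m := 2) (zzS x E') := by
  intro b hb i
  constructor
  · intro h0
    obtain ⟨hiE', hx⟩ := zz_val0 h0
    have hiE : i ∉ E := fun h => hiE' (hEE h)
    exact (hb i).1 (by rw [zzS_notmem hiE]; rw [zzS_notmem hiE'] at h0; exact h0)
  · intro h2
    obtain ⟨hiE', hx⟩ := zz_val2 h2
    have hiE : i ∉ E := fun h => hiE' (hEE h)
    exact (hb i).2 (by rw [zzS_notmem hiE]; rw [zzS_notmem hiE'] at h2; exact h2)

def LegalStep (f : BN n) (z w : Fin n → Fin 3) : Prop :=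
  z ≠ w ∧ ∀ i, z i ≠ w i →
    (((w i : ℤ) = (z i : ℤ) + 1) ∧ ∃ b ∈ beta (m := 2) z, f b i = true) ∨
    (((w i : ℤ) = (z i : ℤ) - 1) ∧ ∃ b ∈ beta (m := 2) z, f b i = false)

def nextIn : List (Fin n → Fin 3) → (Fin n → Fin 3) → Option (Fin n → Fin 3)
  | u :: w :: t, z => if z = u then some w else nextIn (w :: t) z
  | _, _ => none

def mkF (L : List (Fin n → Fin 3)) (z : Fin n → Fin 3) (i : Fin n) : ℤ :=
  match nextIn L z with
  | some w => (w i : ℤ) - (z i : ℤ)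
  | none => 0

lemma nextIn_legal (f : BN n) :
    ∀ (l : List (Fin n → Fin 3)) (a z w), List.Chain (LegalStep f) a l →
      nextIn (a :: l) z = some w → LegalStep f z w := by
  intro l
  induction l with
  | nil => intro a z w _ h; simp [nextIn] at h
  | cons b t ih =>
    intro a z w hch h
    rw [List.Chain, List.chain_cons] at hch
    by_cases hz : z = a
    · subst hz
      simp [nextIn] at h
      subst h
      exact hch.1
    · rw [show nextIn (a :: b :: t) z = nextIn (b :: t) z from by
        simp [nextIn, hz]] at h
      exact ih b z w hch.2 h

lemma nextIn_suffix :
    ∀ (L : List (Fin n → Fin 3)), L.Nodup →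
      ∀ a b t, (a :: b :: t) <:+ L → nextIn L a = some b := by
  intro L
  induction L with
  | nil => intro _ a b t h; have := h.length_le; simp at this
  | cons u L' ih =>
    intro hnd a b t hsuf
    rw [List.suffix_cons_iff] at hsuf
    rcases hsuf with heq | hsuf
    · injection heq with h1 h2
      subst h1; subst h2
      simp [nextIn]
    · have haL' : a ∈ L' := hsuf.mem List.mem_cons_self
      have hau : a ≠ u := by
        rintro rfl
        exact (List.nodup_cons.mp hnd).1 haL'
      cases L' with
      | nil => simp at haL'
      | cons v t' =>
        rw [show nextIn (u :: v :: t') a = nextIn (v :: t') a from by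
          simp [nextIn, hau]]
        exact ih (List.nodup_cons.mp hnd).2 a b t hsuf

end Stmt10Aux
section Stmt10Aux2

variable {n : ℕ}

lemma mkF_vals (f : BN n) (a : Fin n → Fin 3) (l : List (Fin n → Fin 3))
    (hch : List.Chain (LegalStep f) a l) (z : Fin n → Fin 3) (i : Fin n) :
    mkF (a :: l) z i = -1 ∨ mkF (a :: l) z i = 0 ∨ mkF (a :: l) z i = 1 := by
  rcases h : nextIn (a :: l) z with _ | w
  · right; left; simp [mkF, h]
  · have hleg := nextIn_legal f l a z w hch h
    have hF : mkF (a :: l) z i = (w i : ℤ) - (z i : ℤ) := by simp [mkF, h]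
    by_cases hzw : z i = w i
    · right; left; rw [hF, hzw]; ring
    · rcases hleg.2 i hzw with ⟨he, -⟩ | ⟨he, -⟩
      · right; right; rw [hF, he]; ring
      · left; rw [hF, he]; ring

lemma mkF_refines (f : BN n) (a : Fin n → Fin 3) (l : List (Fin n → Fin 3))
    (hch : List.Chain (LegalStep f) a l) :
    refines (m := 2) (mkF (a :: l)) f := by
  intro z i
  constructor
  · intro hpos
    rcases h : nextIn (a :: l) z with _ | w
    · simp [mkF, h] at hpos
    · have hleg := nextIn_legal f l a z w hch h
      have hF : mkF (a :: l) z i = (w i : ℤ) - (z i : ℤ) := by simp [mkF, h]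
      by_cases hzw : z i = w i
      · rw [hF, hzw] at hpos; omega
      · rcases hleg.2 i hzw with ⟨he, hb⟩ | ⟨he, hb⟩
        · exact hb
        · rw [hF, he] at hpos; omega
  · intro hneg
    rcases h : nextIn (a :: l) z with _ | w
    · simp [mkF, h] at hneg
    · have hleg := nextIn_legal f l a z w hch h
      have hF : mkF (a :: l) z i = (w i : ℤ) - (z i : ℤ) := by simp [mkF, h]
      by_cases hzw : z i = w i
      · rw [hF, hzw] at hneg; omega
      · rcases hleg.2 i hzw with ⟨he, hb⟩ | ⟨he, hb⟩
        · rw [hF, he] at hneg; omega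
        · exact hb

lemma follow (f : BN n) (L : List (Fin n → Fin 3)) (hnd : L.Nodup) :
    ∀ (l : List (Fin n → Fin 3)) (a), List.Chain (LegalStep f) a l →
      (a :: l) <:+ L →
      Relation.ReflTransGen (mnStep (mkF L)) a ((a :: l).getLast (by simp)) := by
  intro l
  induction l with
  | nil => intro a _ _; simp only [List.getLast_singleton]; exact Relation.ReflTransGen.refl
  | cons b t ih =>
    intro a hch hsuf
    rw [List.Chain, List.chain_cons] at hch
    have hnx : nextIn L a = some b := nextIn_suffix L hnd a b t hsuf
    have hstep : mnStep (mkF L) a b := by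
      refine ⟨hch.1.1, fun i hi => ?_⟩
      simp [mkF, hnx]
    have hsuf' : (b :: t) <:+ L := (List.suffix_cons a (b :: t)).trans hsuf
    have := ih b hch.2 hsuf'
    rw [show ((a :: b :: t).getLast (by simp)) = ((b :: t).getLast (by simp)) from
      List.getLast_cons (by simp)]
    exact Relation.ReflTransGen.head hstep this

lemma chain_snoc {α : Type*} (r : α → α → Prop) :
    ∀ (l : List α) (a b : α), List.Chain r a l → r ((a :: l).getLast (by simp)) b →
      List.Chain r a (l ++ [b]) := by
  intro l
  induction l with
  | nil =>
    intro a b _ hr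
    simp only [List.getLast_singleton] at hr
    exact List.IsChain.cons_cons hr (List.isChain_singleton b)
  | cons c t ih =>
    intro a b hch hr
    rw [List.Chain, List.chain_cons] at hch
    rw [show ((a :: c :: t).getLast (by simp)) = ((c :: t).getLast (by simp)) from
      List.getLast_cons (by simp)] at hr
    exact List.chain_cons.mpr ⟨hch.1, ih c b hch.2 hr⟩

lemma getLast_snoc {α : Type*} :
    ∀ (l : List α) (a b : α), ((a :: (l ++ [b])).getLast (by simp)) = b := by
  intro l
  induction l with
  | nil => intro a b; rfl
  | cons c t ih =>
    intro a b
    rw [show ((a :: (c :: t ++ [b])).getLast (by simp)) = ((c :: t ++ [b]).getLast (by simp))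
      from List.getLast_cons (by simp)]
    exact ih c b

end Stmt10Aux2
section Stmt10Aux3

variable {n : ℕ}

structure InvS (f : BN n) (x : Fin n → Bool) (q : Fin n → PState)
    (E : Finset (Fin n)) (v : Fin n → Bool) (l : List (Fin n → Fin 3)) : Prop where
  hout : ∀ i, i ∉ E → q i = PState.ofBool (x i)
  hvb : ∀ i ∈ E, ∀ c : Bool, q i = PState.ofBool c → v i = c
  hvu : ∀ i ∈ E, q i = PState.up → v i = true
  hvd : ∀ i ∈ E, q i = PState.down → v i = false
  hwit : ∀ i ∈ E, ∃ b ∈ beta (m := 2) (zzS x E), f b i = v i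
  hch : List.Chain (LegalStep f) (double x) l
  hlast : (double x :: l).getLast (by simp) = zzS x E
  hnd : (double x :: l).Nodup
  hone : ∀ w ∈ double x :: l, ∀ j, w j = (1 : Fin 3) → j ∈ E
  htail : ∀ w ∈ l, ∃ j ∈ E, w j = (1 : Fin 3)

lemma inv_of_reach (f : BN n) (x : Fin n → Bool) :
    ∀ q, mpReachP f (embed x) q → ∃ E v l, InvS f x q E v l := by
  intro q h
  induction h with
  | refl =>
    refine ⟨∅, fun _ => false, [], ?_⟩
    constructor
    · intro i _; rfl
    · intro i hi; simp at hi
    · intro i hi; simp at hi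
    · intro i hi; simp at hi
    · intro i hi; simp at hi
    · exact List.Chain.nil
    · rw [List.getLast_singleton]
      funext i; simp [zzS]
    · simp
    · intro w hw j hj
      simp at hw
      subst hw
      exact absurd hj (double_ne_one x j)
    · intro w hw; simp at hw
  | @tail q q' hreach hstep ih =>
    obtain ⟨E, v, l, inv⟩ := ih
    obtain ⟨i, hne, hoth, hcase⟩ := hstep
    rcases hcase with ⟨hup, hnone, b0, hb0, hfb0⟩ | ⟨honeq, hqi⟩ |
      ⟨hdn, hnzero, b0, hb0, hfb0⟩ | ⟨hzero, hqi⟩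
    -- Case A : q' i = up
    · by_cases hiE : i ∈ E
      · -- i already dynamic: update v only
        refine ⟨E, Function.update v i true, l, ?_⟩
        constructor
        · intro j hj
          rw [← hoth j (fun h => hj (h ▸ hiE))]
          exact inv.hout j hj
        · intro j hjE c hc
          by_cases hji : j = i
          · subst hji
            rw [hup] at hc
            cases c <;> simp [PState.ofBool] at hc
          · rw [Function.update_of_ne hji]
            exact inv.hvb j hjE c (by rw [hoth j hji]; exact hc)
        · intro j hjE hj
          by_cases hji : j = i
          · subst hji; simp
          · rw [Function.update_of_ne hji]
            exact inv.hvu j hjE (by rw [hoth j hji]; exact hj)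
        · intro j hjE hj
          by_cases hji : j = i
          · subst hji; rw [hup] at hj; simp at hj
          · rw [Function.update_of_ne hji]
            exact inv.hvd j hjE (by rw [hoth j hji]; exact hj)
        · intro j hjE
          by_cases hji : j = i
          · subst hji
            refine ⟨b0, gamma_sub inv.hout hb0, ?_⟩
            rw [Function.update_self]
            exact hfb0
          · obtain ⟨b, hb, hfb⟩ := inv.hwit j hjE
            exact ⟨b, hb, by rw [Function.update_of_ne hji]; exact hfb⟩
        · exact inv.hch
        · exact inv.hlast
        · exact inv.hnd
        · exact inv.hone
        · exact inv.htail
      · -- i newly dynamized; x i = false since q i ≠ one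
        have hqib : q i = PState.ofBool (x i) := inv.hout i hiE
        have hxi : x i = false := by
          cases hx : x i
          · rfl
          · rw [hx] at hqib; exact absurd hqib hnone
        have hzzi : zzS x E i = 0 := by
          rw [zzS_notmem hiE]; simp [double, hxi]
        have hzz'i : zzS x (insert i E) i = 1 := zzS_mem (Finset.mem_insert_self i E)
        have hagree : ∀ j, j ≠ i → zzS x E j = zzS x (insert i E) j := by
          intro j hji
          simp only [zzS, Finset.mem_insert, hji, false_or]
        have hlegal : LegalStep f (zzS x E) (zzS x (insert i E)) := by
          constructor
          · intro hEq
            have := congrFun hEq i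
            rw [hzzi, hzz'i] at this
            exact absurd this (by decide)
          · intro j hj
            have hji : j = i := by
              by_contra hji
              exact hj (hagree j hji)
            subst hji
            left
            refine ⟨by rw [hzzi, hzz'i]; decide, b0, gamma_sub inv.hout hb0, hfb0⟩
        have hmono := beta_mono (x := x) (Finset.subset_insert i E)
        refine ⟨insert i E, Function.update v i true, l ++ [zzS x (insert i E)], ?_⟩
        constructor
        · intro j hj
          have hjE : j ∉ E := fun h => hj (Finset.mem_insert_of_mem h)
          have hji : j ≠ i := fun h => hj (h ▸ Finset.mem_insert_self i E)
          rw [← hoth j hji]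
          exact inv.hout j hjE
        · intro j hjE c hc
          by_cases hji : j = i
          · subst hji
            rw [hup] at hc
            cases c <;> simp [PState.ofBool] at hc
          · rw [Function.update_of_ne hji]
            exact inv.hvb j (by rcases Finset.mem_insert.mp hjE with h | h; exact absurd h hji; exact h)
              c (by rw [hoth j hji]; exact hc)
        · intro j hjE hj
          by_cases hji : j = i
          · subst hji; simp
          · rw [Function.update_of_ne hji]
            exact inv.hvu j (by rcases Finset.mem_insert.mp hjE with h | h; exact absurd h hji; exact h)
              (by rw [hoth j hji]; exact hj)
        · intro j hjE hj
          by_cases hji : j = i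
          · subst hji; rw [hup] at hj; simp at hj
          · rw [Function.update_of_ne hji]
            exact inv.hvd j (by rcases Finset.mem_insert.mp hjE with h | h; exact absurd h hji; exact h)
              (by rw [hoth j hji]; exact hj)
        · intro j hjE
          by_cases hji : j = i
          · subst hji
            refine ⟨b0, hmono (gamma_sub inv.hout hb0), ?_⟩
            rw [Function.update_self]
            exact hfb0
          · obtain ⟨b, hb, hfb⟩ := inv.hwit j
              (by rcases Finset.mem_insert.mp hjE with h | h; exact absurd h hji; exact h)
            exact ⟨b, hmono hb, by rw [Function.update_of_ne hji]; exact hfb⟩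
        · exact chain_snoc _ l (double x) _ inv.hch (by rw [inv.hlast]; exact hlegal)
        · exact getLast_snoc l (double x) _
        · rw [show (double x :: (l ++ [zzS x (insert i E)]))
              = (double x :: l) ++ [zzS x (insert i E)] from by simp]
          rw [List.nodup_append]
          refine ⟨inv.hnd, List.nodup_singleton _, ?_⟩
          intro w hw u hw' hwu0
          subst hwu0
          have hwu : w = zzS x (insert i E) := by simpa using hw'
          have : i ∈ E := inv.hone w hw i (by rw [hwu, hzz'i])
          exact hiE this
        · intro w hw j hj
          rw [show (double x :: (l ++ [zzS x (insert i E)]))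
              = (double x :: l) ++ [zzS x (insert i E)] from by simp] at hw
          rcases List.mem_append.mp hw with hw | hw
          · exact Finset.mem_insert_of_mem (inv.hone w hw j hj)
          · have hwu : w = zzS x (insert i E) := by simpa using hw
            subst hwu
            by_contra hjE'
            rw [zzS_notmem hjE'] at hj
            exact double_ne_one x j hj
        · intro w hw
          rcases List.mem_append.mp hw with hw | hw
          · obtain ⟨j, hjE, hj⟩ := inv.htail w hw
            exact ⟨j, Finset.mem_insert_of_mem hjE, hj⟩
          · have hwu : w = zzS x (insert i E) := by simpa using hw
            subst hwu
            exact ⟨i, Finset.mem_insert_self i E, hzz'i⟩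
    -- Case B : q' i = one, q i = up
    · have hiE : i ∈ E := by
        by_contra hiE
        have := inv.hout i hiE
        rw [hqi] at this
        cases hx : x i <;> rw [hx] at this <;> simp [PState.ofBool] at this
      refine ⟨E, v, l, ?_⟩
      constructor
      · intro j hj
        rw [← hoth j (fun h => hj (h ▸ hiE))]
        exact inv.hout j hj
      · intro j hjE c hc
        by_cases hji : j = i
        · subst hji
          rw [honeq] at hc
          have hc' : c = true := by cases c <;> simp [PState.ofBool] at hc <;> rfl
          rw [hc']
          exact inv.hvu j hjE hqi
        · exact inv.hvb j hjE c (by rw [hoth j hji]; exact hc)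
      · intro j hjE hj
        by_cases hji : j = i
        · subst hji; rw [honeq] at hj; simp at hj
        · exact inv.hvu j hjE (by rw [hoth j hji]; exact hj)
      · intro j hjE hj
        by_cases hji : j = i
        · subst hji; rw [honeq] at hj; simp at hj
        · exact inv.hvd j hjE (by rw [hoth j hji]; exact hj)
      · exact inv.hwit
      · exact inv.hch
      · exact inv.hlast
      · exact inv.hnd
      · exact inv.hone
      · exact inv.htail
    -- Case C : q' i = down
    · by_cases hiE : i ∈ E
      · refine ⟨E, Function.update v i false, l, ?_⟩
        constructor
        · intro j hj
          rw [← hoth j (fun h => hj (h ▸ hiE))]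
          exact inv.hout j hj
        · intro j hjE c hc
          by_cases hji : j = i
          · subst hji
            rw [hdn] at hc
            cases c <;> simp [PState.ofBool] at hc
          · rw [Function.update_of_ne hji]
            exact inv.hvb j hjE c (by rw [hoth j hji]; exact hc)
        · intro j hjE hj
          by_cases hji : j = i
          · subst hji; rw [hdn] at hj; simp at hj
          · rw [Function.update_of_ne hji]
            exact inv.hvu j hjE (by rw [hoth j hji]; exact hj)
        · intro j hjE hj
          by_cases hji : j = i
          · subst hji; simp
          · rw [Function.update_of_ne hji]
            exact inv.hvd j hjE (by rw [hoth j hji]; exact hj)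
        · intro j hjE
          by_cases hji : j = i
          · subst hji
            refine ⟨b0, gamma_sub inv.hout hb0, ?_⟩
            rw [Function.update_self]
            exact hfb0
          · obtain ⟨b, hb, hfb⟩ := inv.hwit j hjE
            exact ⟨b, hb, by rw [Function.update_of_ne hji]; exact hfb⟩
        · exact inv.hch
        · exact inv.hlast
        · exact inv.hnd
        · exact inv.hone
        · exact inv.htail
      · have hqib : q i = PState.ofBool (x i) := inv.hout i hiE
        have hxi : x i = true := by
          cases hx : x i
          · rw [hx] at hqib; exact absurd hqib hnzero
          · rfl
        have hzzi : zzS x E i = 2 := by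
          rw [zzS_notmem hiE]; simp [double, hxi]
        have hzz'i : zzS x (insert i E) i = 1 := zzS_mem (Finset.mem_insert_self i E)
        have hagree : ∀ j, j ≠ i → zzS x E j = zzS x (insert i E) j := by
          intro j hji
          simp only [zzS, Finset.mem_insert, hji, false_or]
        have hlegal : LegalStep f (zzS x E) (zzS x (insert i E)) := by
          constructor
          · intro hEq
            have := congrFun hEq i
            rw [hzzi, hzz'i] at this
            exact absurd this (by decide)
          · intro j hj
            have hji : j = i := by
              by_contra hji
              exact hj (hagree j hji)
            subst hji
            right
            refine ⟨by rw [hzzi, hzz'i]; decide, b0, gamma_sub inv.hout hb0, hfb0⟩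
        have hmono := beta_mono (x := x) (Finset.subset_insert i E)
        refine ⟨insert i E, Function.update v i false, l ++ [zzS x (insert i E)], ?_⟩
        constructor
        · intro j hj
          have hjE : j ∉ E := fun h => hj (Finset.mem_insert_of_mem h)
          have hji : j ≠ i := fun h => hj (h ▸ Finset.mem_insert_self i E)
          rw [← hoth j hji]
          exact inv.hout j hjE
        · intro j hjE c hc
          by_cases hji : j = i
          · subst hji
            rw [hdn] at hc
            cases c <;> simp [PState.ofBool] at hc
          · rw [Function.update_of_ne hji]
            exact inv.hvb j (by rcases Finset.mem_insert.mp hjE with h | h; exact absurd h hji; exact h)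
              c (by rw [hoth j hji]; exact hc)
        · intro j hjE hj
          by_cases hji : j = i
          · subst hji; rw [hdn] at hj; simp at hj
          · rw [Function.update_of_ne hji]
            exact inv.hvu j (by rcases Finset.mem_insert.mp hjE with h | h; exact absurd h hji; exact h)
              (by rw [hoth j hji]; exact hj)
        · intro j hjE hj
          by_cases hji : j = i
          · subst hji; simp
          · rw [Function.update_of_ne hji]
            exact inv.hvd j (by rcases Finset.mem_insert.mp hjE with h | h; exact absurd h hji; exact h)
              (by rw [hoth j hji]; exact hj)
        · intro j hjE
          by_cases hji : j = i
          · subst hji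
            refine ⟨b0, hmono (gamma_sub inv.hout hb0), ?_⟩
            rw [Function.update_self]
            exact hfb0
          · obtain ⟨b, hb, hfb⟩ := inv.hwit j
              (by rcases Finset.mem_insert.mp hjE with h | h; exact absurd h hji; exact h)
            exact ⟨b, hmono hb, by rw [Function.update_of_ne hji]; exact hfb⟩
        · exact chain_snoc _ l (double x) _ inv.hch (by rw [inv.hlast]; exact hlegal)
        · exact getLast_snoc l (double x) _
        · rw [show (double x :: (l ++ [zzS x (insert i E)]))
              = (double x :: l) ++ [zzS x (insert i E)] from by simp]
          rw [List.nodup_append]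
          refine ⟨inv.hnd, List.nodup_singleton _, ?_⟩
          intro w hw u hw' hwu0
          subst hwu0
          have hwu : w = zzS x (insert i E) := by simpa using hw'
          have : i ∈ E := inv.hone w hw i (by rw [hwu, hzz'i])
          exact hiE this
        · intro w hw j hj
          rw [show (double x :: (l ++ [zzS x (insert i E)]))
              = (double x :: l) ++ [zzS x (insert i E)] from by simp] at hw
          rcases List.mem_append.mp hw with hw | hw
          · exact Finset.mem_insert_of_mem (inv.hone w hw j hj)
          · have hwu : w = zzS x (insert i E) := by simpa using hw
            subst hwu
            by_contra hjE'
            rw [zzS_notmem hjE'] at hj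
            exact double_ne_one x j hj
        · intro w hw
          rcases List.mem_append.mp hw with hw | hw
          · obtain ⟨j, hjE, hj⟩ := inv.htail w hw
            exact ⟨j, Finset.mem_insert_of_mem hjE, hj⟩
          · have hwu : w = zzS x (insert i E) := by simpa using hw
            subst hwu
            exact ⟨i, Finset.mem_insert_self i E, hzz'i⟩
    -- Case D : q' i = zero, q i = down
    · have hiE : i ∈ E := by
        by_contra hiE
        have := inv.hout i hiE
        rw [hqi] at this
        cases hx : x i <;> rw [hx] at this <;> simp [PState.ofBool] at this
      refine ⟨E, v, l, ?_⟩
      constructor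
      · intro j hj
        rw [← hoth j (fun h => hj (h ▸ hiE))]
        exact inv.hout j hj
      · intro j hjE c hc
        by_cases hji : j = i
        · subst hji
          rw [hzero] at hc
          have hc' : c = false := by cases c <;> simp [PState.ofBool] at hc <;> rfl
          rw [hc']
          exact inv.hvd j hjE hqi
        · exact inv.hvb j hjE c (by rw [hoth j hji]; exact hc)
      · intro j hjE hj
        by_cases hji : j = i
        · subst hji; rw [hzero] at hj; simp at hj
        · exact inv.hvu j hjE (by rw [hoth j hji]; exact hj)
      · intro j hjE hj
        by_cases hji : j = i
        · subst hji; rw [hzero] at hj; simp at hj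
        · exact inv.hvd j hjE (by rw [hoth j hji]; exact hj)
      · exact inv.hwit
      · exact inv.hch
      · exact inv.hlast
      · exact inv.hnd
      · exact inv.hone
      · exact inv.htail

end Stmt10Aux3
theorem stmt10 {n : ℕ} (f : BN n) (x y : Fin n → Bool)
    (h : y ∈ mpReach f x) :
    ∃ F : (Fin n → Fin 3) → Fin n → ℤ,
      (∀ z i, F z i = -1 ∨ F z i = 0 ∨ F z i = 1) ∧
      refines (m := 2) F f ∧
      Relation.ReflTransGen (mnStep F) (double x) (double y) := by
  by_cases hxy : x = y
  · subst hxy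
    refine ⟨fun _ _ => 0, fun z i => Or.inr (Or.inl rfl), ?_, Relation.ReflTransGen.refl⟩
    intro z i
    constructor
    · intro hp; simp at hp
    · intro hp; simp at hp
  · obtain ⟨E, v, l, inv⟩ := inv_of_reach f x (embed y) h
    have hvy : ∀ i ∈ E, v i = y i := by
      intro i hi
      exact inv.hvb i hi (y i) rfl
    have houty : ∀ i, i ∉ E → x i = y i := by
      intro i hi
      exact (pofBool_inj (inv.hout i hi)).symm
    have hE : E.Nonempty := by
      rcases Finset.eq_empty_or_nonempty E with hE | hE
      · exfalso
        apply hxy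
        funext i
        exact houty i (by rw [hE]; exact Finset.notMem_empty i)
      · exact hE
    obtain ⟨i0, hi0⟩ := hE
    have hyne1 : ∀ j, double y j ≠ (1 : Fin 3) := double_ne_one y
    have hlegal : LegalStep f (zzS x E) (double y) := by
      constructor
      · intro hEq
        have := congrFun hEq i0
        rw [zzS_mem hi0] at this
        exact hyne1 i0 this.symm
      · intro j hj
        have hjE : j ∈ E := by
          by_contra hjE
          apply hj
          rw [zzS_notmem hjE]
          simp [double, houty j hjE]
        have hz1 : zzS x E j = 1 := zzS_mem hjE
        obtain ⟨b, hb, hfb⟩ := inv.hwit j hjE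
        rw [hvy j hjE] at hfb
        cases hyj : y j
        · right
          constructor
          · rw [hz1]; simp [double, hyj]
          · exact ⟨b, hb, by rw [hyj] at hfb; exact hfb⟩
        · left
          constructor
          · rw [hz1]; simp [double, hyj]
          · exact ⟨b, hb, by rw [hyj] at hfb; exact hfb⟩
    have hchain : List.Chain (LegalStep f) (double x) (l ++ [double y]) :=
      chain_snoc _ l (double x) _ inv.hch (by rw [inv.hlast]; exact hlegal)
    have hnd : (double x :: (l ++ [double y])).Nodup := by
      rw [show (double x :: (l ++ [double y])) = (double x :: l) ++ [double y] from by simp]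
      rw [List.nodup_append]
      refine ⟨inv.hnd, List.nodup_singleton _, ?_⟩
      intro w hw u hw' hwu0
      subst hwu0
      have hwu : w = double y := by simpa using hw'
      subst hwu
      rcases List.mem_cons.mp hw with hw | hw
      · exact hxy (double_inj hw.symm)
      · obtain ⟨j, hjE, hj⟩ := inv.htail _ hw
        exact hyne1 j hj
    refine ⟨mkF (double x :: (l ++ [double y])), ?_, ?_, ?_⟩
    · exact fun z i => mkF_vals f (double x) (l ++ [double y]) hchain z i
    · exact mkF_refines f (double x) (l ++ [double y]) hchain
    · have := follow f (double x :: (l ++ [double y])) hnd (l ++ [double y]) (double x)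
        hchain (List.suffix_refl _)
      rwa [getLast_snoc] at this
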